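/- Fix d ≥ 1 and β ∈ (0,∞], and let Q be a translation-invariant augmented β-arboreal gas Gibbs measure on Z^d. Then for every translation-invariant Borel event X ⊆ A(Z^d) that is measurable with respect to the σ-algebra generated by the subgraph coordinate (S,Φ) ↦ S, there exists a tail event Y ∈ 𝒯 such that Q(X Δ Y) = 0. In other words, the σ-algebra of translation-invariant events depending only on the subgraph coordinate is contained in the Q-completion of the tail σ-algebra 𝒯. -/

import Mathlib

set_option maxHeartbeats 1000000


open MeasureTheory
open scoped ENNReal symmDiff

noncomputable section

namespace ArborealGas

variable {V : Type*} (G : SimpleGraph V)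

/-- The (inner vertex) boundary of a subgraph `H` relative to the host subgraph `Γ` of `G`:
the vertices of `H` incident to an edge of `Γ` not belonging to `H`. -/
def bdry (Γ H : G.Subgraph) : Set V :=
  {v | v ∈ H.verts ∧ ∃ u, Γ.Adj v u ∧ ¬ H.Adj v u}

/-- Restriction of a relation to pairs inside a set. -/
def restrictRel (B : Set V) (φ : V → V → Prop) : V → V → Prop :=
  fun a b => a ∈ B ∧ b ∈ B ∧ φ a b

/-- `u` and `v` are connected in the quotient graph `F/φ` (the graph obtained from
`F` by identifying vertices of `F` lying in a common class of `φ`). -/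
def quotConn (F : G.Subgraph) (φ : V → V → Prop) : V → V → Prop :=
  Relation.ReflTransGen fun a b =>
    F.Adj a b ∨ (a ∈ F.verts ∧ b ∈ F.verts ∧ φ a b)

/-- `F` extends the boundary condition `φ` (an equivalence relation on the boundary of `H`
in the host `Γ`): the quotient `F/φ` is acyclic, i.e. every edge of `F` is a bridge of `F/φ`. -/
def Extends (Γ H : G.Subgraph) (φ : V → V → Prop) (F : G.Subgraph) : Prop :=
  ∀ a b, F.Adj a b →
    ¬ quotConn G (F.deleteEdges {s(a, b)}) (restrictRel (bdry G Γ H) φ) a b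

/-- `F` is a spanning forest of `H` extending the boundary condition `φ`:
an element of `𝓕(H,φ)` containing every vertex of `H`. -/
def IsSpanningForestExtending (Γ H : G.Subgraph) (φ : V → V → Prop) (F : G.Subgraph) : Prop :=
  F ≤ H ∧ F.verts = H.verts ∧ Extends G Γ H φ F

/-- `F` is an `(H,φ)`-maximal spanning forest: no edge of `H` can be added to `F`
while remaining a spanning forest extending `φ`. -/
def IsMaximalSpanningForestExtending (Γ H : G.Subgraph) (φ : V → V → Prop)
    (F : G.Subgraph) : Prop :=
  IsSpanningForestExtending G Γ H φ F ∧
    ∀ a b, (hab : H.Adj a b) → ¬ F.Adj a b →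
      ¬ IsSpanningForestExtending G Γ H φ (F ⊔ G.subgraphOfAdj (H.adj_sub hab))

open Classical in
/-- The unnormalized arboreal gas weight `β ^ |F|` of a spanning forest `F` of `H`
extending `φ` (with the convention `0 ^ 0 = 1`); for `β = ∞` the uniform weight on
`(H,φ)`-maximal spanning forests. -/
def gibbsWeight (β : ℝ≥0∞) (Γ H : G.Subgraph) (φ : V → V → Prop) (F : G.Subgraph) : ℝ≥0∞ :=
  if β = ⊤ then (if IsMaximalSpanningForestExtending G Γ H φ F then 1 else 0)
  else if IsSpanningForestExtending G Γ H φ F then β ^ F.edgeSet.ncard else 0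

/-- The σ-algebra on the space of subgraphs of `G`: the product (cylinder) σ-algebra,
generated by the vertex- and edge-membership maps. -/
instance subgraphMeasurableSpace : MeasurableSpace G.Subgraph :=
  MeasurableSpace.comap
    (fun S => ((fun v => v ∈ S.verts), S.Adj) :
      G.Subgraph → (V → Prop) × (V → V → Prop)) inferInstance

/-- The finite-volume `β`-arboreal gas Gibbs measure `P^φ_{H,β}` on the finite subgraph `H`
of the host graph `Γ` with boundary condition `φ`, regarded as a measure on subgraphs of `G`:
each spanning forest `F` of `H` extending `φ` gets probability proportional to `β ^ |F|`
(uniform on `(H,φ)`-maximal spanning forests when `β = ∞`). -/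
def finGibbs (β : ℝ≥0∞) (Γ H : G.Subgraph) (φ : V → V → Prop) : Measure G.Subgraph :=
  (∑' F : G.Subgraph, gibbsWeight G β Γ H φ F)⁻¹ •
    Measure.sum fun F : G.Subgraph => gibbsWeight G β Γ H φ F • Measure.dirac F

/-- The raw space in which augmented subgraphs of `G` live: pairs `(S, Φ)` of a subgraph `S`
of `G` and a boundary map `Φ` assigning to each (finite) subgraph `H` a relation on `V`.
It carries the product Borel σ-algebra. -/
abbrev AugSub := G.Subgraph × (G.Subgraph → V → V → Prop)

/-- `φ` is an equivalence relation on the set `B` (relating only elements of `B`). -/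
def IsEquivRelOn (B : Set V) (φ : V → V → Prop) : Prop :=
  (∀ u v, φ u v → u ∈ B ∧ v ∈ B) ∧ (∀ u ∈ B, φ u u) ∧
    (∀ u v, φ u v → φ v u) ∧ (∀ u v w, φ u v → φ v w → φ u w)

/-- `(S, Φ)` is an augmented subgraph of the host graph `Γ ≤ G`: `S ≤ Γ`, for each finite
subgraph `H` of `Γ` the relation `Φ(H)` is an equivalence relation on the boundary `∂H`,
and the consistency condition holds: for finite subgraphs `H ⊆ K` of `Γ` and `u, v ∈ ∂H`,
`u` and `v` are `Φ(H)`-related iff they are connected in `((S ⊓ K) ∖ E[H])/Φ(K)`. -/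
def IsAugmentedIn (Γ : G.Subgraph) (A : AugSub G) : Prop :=
  A.1 ≤ Γ ∧
  (∀ H : G.Subgraph, H ≤ Γ → H.verts.Finite → IsEquivRelOn (bdry G Γ H) (A.2 H)) ∧
  (∀ H K : G.Subgraph, H ≤ K → K ≤ Γ → K.verts.Finite →
    ∀ u v, u ∈ bdry G Γ H → v ∈ bdry G Γ H →
      (A.2 H u v ↔
        quotConn G ((A.1 ⊓ K).deleteEdges H.edgeSet)
          (restrictRel (bdry G Γ K) (A.2 K)) u v))

/-- The data of an augmented subgraph `(S, Φ)` determined outside the finite subgraph `H`: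
the subgraph `S ∖ E[H]` together with the family `Φ_H = (Φ(K) : K ⊇ H finite)`. -/
def outsideMap (Γ H : G.Subgraph) (A : AugSub G) :
    G.Subgraph × (G.Subgraph → V → V → Prop) :=
  (A.1.deleteEdges H.edgeSet,
    fun K u v => (H ≤ K ∧ K ≤ Γ ∧ K.verts.Finite) ∧ A.2 K u v)

/-- The σ-algebra `𝒢_H` on augmented subgraphs generated by `(S, Φ) ↦ (S ∖ E[H], Φ_H)`. -/
def outSigma (Γ H : G.Subgraph) : MeasurableSpace (AugSub G) :=
  MeasurableSpace.comap (outsideMap G Γ H) inferInstance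

/-- A tail event: an event belonging to `𝒢_H` for every finite subgraph `H`. -/
def IsTailEvent (Γ : G.Subgraph) (X : Set (AugSub G)) : Prop :=
  ∀ H : G.Subgraph, H ≤ Γ → H.verts.Finite → MeasurableSet[outSigma G Γ H] X

/-- `Q` is an augmented `β`-arboreal gas Gibbs measure on the host graph `Γ ≤ G`:
a probability measure on augmented subgraphs of `Γ` such that for every finite subgraph `H`
of `Γ` and every subgraph `F₀` of `H`, the conditional probability of `{A ∩ H = F₀}` given
`𝒢_H` is almost surely `P^{Φ(H)}_{H,β}(F₀)`. -/
def IsAugGibbs (β : ℝ≥0∞) (Γ : G.Subgraph) (Q : Measure (AugSub G)) : Prop :=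
  IsProbabilityMeasure Q ∧
  Q {A : AugSub G | IsAugmentedIn G Γ A} = 1 ∧
  ∀ H : G.Subgraph, H ≤ Γ → H.verts.Finite →
    ∀ F₀ : G.Subgraph, F₀ ≤ H →
      (Q[({A : AugSub G | A.1 ⊓ H = F₀}).indicator (fun _ => (1 : ℝ)) | outSigma G Γ H])
        =ᵐ[Q] fun A => (finGibbs G β Γ H (A.2 H) {F₀}).toReal

/-- `P` is a `β`-arboreal gas Gibbs measure on the host graph `Γ ≤ G`: the pushforward of
some augmented `β`-arboreal gas Gibbs measure (a Gibbs augmentation of `P`) under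
`(S, Φ) ↦ S`. -/
def IsGibbs (β : ℝ≥0∞) (Γ : G.Subgraph) (P : Measure G.Subgraph) : Prop :=
  ∃ Q : Measure (AugSub G), IsAugGibbs G β Γ Q ∧ Q.map Prod.fst = P

/-- The finite subgraph with vertex set `{u, v}` and no edges. -/
def pairSub (u v : V) : G.Subgraph where
  verts := {u, v}
  Adj _ _ := False
  adj_sub h := h.elim
  edge_vert h := h.elim
  symm := ⟨fun _ _ h => h.elim⟩

/-- The augmented connectivity relation of an augmented subgraph `(S, Φ)`:
`u ↔ v` iff `Φ({u,v})(u,v) = 1`. -/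
def augConn (A : AugSub G) (u v : V) : Prop :=
  A.2 (pairSub G u v) u v

/-- The subgraph of `G` induced by a set `I` of vertices. -/
def traceSub (I : Set V) : G.Subgraph where
  verts := I
  Adj u v := G.Adj u v ∧ u ∈ I ∧ v ∈ I
  adj_sub h := h.1
  edge_vert h := h.2.1
  symm := ⟨fun _ _ h => ⟨G.adj_symm h.1, h.2.2, h.2.1⟩⟩

/-- A subgraph is connected: nonempty vertex set, any two vertices joined by a path. -/
def SubConnected (S : G.Subgraph) : Prop :=
  S.verts.Nonempty ∧ ∀ u ∈ S.verts, ∀ v ∈ S.verts, Relation.ReflTransGen S.Adj u v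

/-- The hypercubic lattice `ℤ^d`: vertices `Fin d → ℤ`, edges between points at
`ℓ¹`-distance one. -/
def ZdGraph (d : ℕ) : SimpleGraph (Fin d → ℤ) where
  Adj x y := ∑ i, (x i - y i).natAbs = 1
  symm := ⟨by
    intro x y h
    rw [← h]
    exact Finset.sum_congr rfl fun i _ => by omega⟩
  loopless := ⟨by intro x h; simp at h⟩

/-- Translation of subgraphs of `ℤ^d` by a lattice vector `t`. -/
def translateSub {d : ℕ} (t : Fin d → ℤ) (S : (ZdGraph d).Subgraph) : (ZdGraph d).Subgraph where
  verts := {v | v - t ∈ S.verts}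
  Adj u v := S.Adj (u - t) (v - t)
  adj_sub := by
    intro u v h
    have h2 := S.adj_sub h
    simpa [ZdGraph, sub_sub_sub_cancel_right] using h2
  edge_vert := by intro u v h; exact S.edge_vert h
  symm := ⟨fun _ _ h => S.adj_symm h⟩

/-- Translation of augmented subgraphs of `ℤ^d` by a lattice vector `t`:
`(τ_t Φ)(H)(u,v) = Φ(H - t)(u - t, v - t)`. -/
def translateAug {d : ℕ} (t : Fin d → ℤ) (A : AugSub (ZdGraph d)) : AugSub (ZdGraph d) :=
  (translateSub t A.1, fun K u v => A.2 (translateSub (-t) K) (u - t) (v - t))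

/-- A translation-invariant augmented `β`-arboreal gas Gibbs measure on `ℤ^d`. -/
def IsTransInvAugGibbs (d : ℕ) (β : ℝ≥0∞) (Q : Measure (AugSub (ZdGraph d))) : Prop :=
  IsAugGibbs (ZdGraph d) β ⊤ Q ∧ ∀ t, Q.map (translateAug t) = Q

/-- An extremal point of the convex set of translation-invariant augmented `β`-arboreal gas
Gibbs measures on `ℤ^d`. -/
def IsExtremalTransInvAugGibbs (d : ℕ) (β : ℝ≥0∞)
    (Q : Measure (AugSub (ZdGraph d))) : Prop :=
  IsTransInvAugGibbs d β Q ∧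
    ∀ (Q₁ Q₂ : Measure (AugSub (ZdGraph d))) (t : ℝ≥0∞), 0 < t → t < 1 →
      IsTransInvAugGibbs d β Q₁ → IsTransInvAugGibbs d β Q₂ →
      Q = t • Q₁ + (1 - t) • Q₂ → Q₁ = Q₂


/-! ### Auxiliary measurability lemmas -/

lemma measurable_and_prop {α : Type*} [MeasurableSpace α] {p q : α → Prop}
    (hp : Measurable p) (hq : Measurable q) : Measurable fun a => p a ∧ q a := by
  rw [← measurableSet_setOf] at hp hq ⊢
  exact hp.inter hq

lemma measurable_subgraphEmb :
    Measurable (fun S : G.Subgraph => ((fun v => v ∈ S.verts), S.Adj) :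
      G.Subgraph → (V → Prop) × (V → V → Prop)) :=
  fun _ hs => ⟨_, hs, rfl⟩

lemma measurable_vertsMem (v : V) : Measurable fun S : G.Subgraph => v ∈ S.verts :=
  (measurable_pi_apply v).comp (measurable_fst.comp (measurable_subgraphEmb G))

lemma measurable_adjMem (u v : V) : Measurable fun S : G.Subgraph => S.Adj u v :=
  (measurable_pi_apply v).comp
    ((measurable_pi_apply u).comp (measurable_snd.comp (measurable_subgraphEmb G)))

lemma measurable_to_subgraph {α : Type*} [MeasurableSpace α] {f : α → G.Subgraph}
    (h1 : ∀ v, Measurable fun a => v ∈ (f a).verts)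
    (h2 : ∀ u v, Measurable fun a => (f a).Adj u v) : Measurable f := by
  intro s hs
  obtain ⟨s', hs', rfl⟩ := hs
  exact (Measurable.prod (measurable_pi_iff.mpr h1)
    (measurable_pi_iff.mpr fun u => measurable_pi_iff.mpr (h2 u))) hs'

lemma measurable_phiEval (K : G.Subgraph) (u v : V) :
    Measurable fun A : AugSub G => A.2 K u v :=
  (measurable_pi_apply v).comp ((measurable_pi_apply u).comp
    ((measurable_pi_apply K).comp measurable_snd))

lemma measurable_outsideMap (Γ H : G.Subgraph) : Measurable (outsideMap G Γ H) := by
  apply Measurable.prod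
  · apply measurable_to_subgraph
    · intro v
      simp only [outsideMap, SimpleGraph.Subgraph.deleteEdges_verts]
      exact (measurable_vertsMem G v).comp measurable_fst
    · intro u v
      simp only [outsideMap, SimpleGraph.Subgraph.deleteEdges_adj]
      exact measurable_and_prop
        ((measurable_adjMem G u v).comp measurable_fst) measurable_const
  · exact measurable_pi_iff.mpr fun K => measurable_pi_iff.mpr fun u =>
      measurable_pi_iff.mpr fun v =>
        measurable_and_prop measurable_const (measurable_phiEval G K u v)

lemma outSigma_le_ambient (Γ H : G.Subgraph) :
    outSigma G Γ H ≤ (inferInstance : MeasurableSpace (AugSub G)) :=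
  (measurable_outsideMap G Γ H).comap_le

lemma outSigma_antitone {Γ H H' : G.Subgraph} (hHH' : H ≤ H') :
    outSigma G Γ H' ≤ outSigma G Γ H := by
  classical
  set g : AugSub G → AugSub G := fun T =>
    (T.1.deleteEdges H'.edgeSet,
      fun K u v => (H' ≤ K ∧ K ≤ Γ ∧ K.verts.Finite) ∧ T.2 K u v) with hg_def
  have hg : Measurable g := by
    apply Measurable.prod
    · apply measurable_to_subgraph
      · intro v
        simp only [hg_def, SimpleGraph.Subgraph.deleteEdges_verts]
        exact (measurable_vertsMem G v).comp measurable_fst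
      · intro u v
        simp only [hg_def, SimpleGraph.Subgraph.deleteEdges_adj]
        exact measurable_and_prop
          ((measurable_adjMem G u v).comp measurable_fst) measurable_const
    · exact measurable_pi_iff.mpr fun K => measurable_pi_iff.mpr fun u =>
        measurable_pi_iff.mpr fun v =>
          measurable_and_prop measurable_const (measurable_phiEval G K u v)
  have hcomp : outsideMap G Γ H' = g ∘ outsideMap G Γ H := by
    funext A
    show (A.1.deleteEdges H'.edgeSet, _) = (_, _)
    refine Prod.ext ?_ ?_
    · show A.1.deleteEdges H'.edgeSet = (A.1.deleteEdges H.edgeSet).deleteEdges H'.edgeSet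
      rw [SimpleGraph.Subgraph.deleteEdges_deleteEdges,
        Set.union_eq_self_of_subset_left (SimpleGraph.Subgraph.edgeSet_mono hHH')]
    · funext K u v
      show ((H' ≤ K ∧ K ≤ Γ ∧ K.verts.Finite) ∧ A.2 K u v) =
        ((H' ≤ K ∧ K ≤ Γ ∧ K.verts.Finite) ∧ ((H ≤ K ∧ K ≤ Γ ∧ K.verts.Finite) ∧ A.2 K u v))
      exact propext ⟨fun h => ⟨h.1, ⟨hHH'.trans h.1.1, h.1.2⟩, h.2⟩, fun h => ⟨h.1, h.2.2⟩⟩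
  show MeasurableSpace.comap (outsideMap G Γ H') _ ≤ _
  rw [hcomp, ← MeasurableSpace.comap_comp]
  exact MeasurableSpace.comap_mono hg.comap_le

/-! ### Cylinder σ-algebras on the subgraph coordinate -/

lemma measurable_of_setOf {α : Type*} {m : MeasurableSpace α} {p : α → Prop}
    (h : MeasurableSet[m] {a | p a}) : @Measurable _ _ m _ p :=
  (@measurableSet_setOf α m p).mp h

/-- Generators of the cylinder σ-algebra supported on the vertex set `J`. -/
def cylGen (J : Set V) : Set (Set (AugSub G)) :=
  {s | (∃ v ∈ J, s = {A : AugSub G | v ∈ A.1.verts}) ∨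
    ∃ u ∈ J, ∃ v ∈ J, s = {A : AugSub G | A.1.Adj u v}}

/-- The cylinder σ-algebra supported on the vertex set `J`. -/
def mcyl (J : Set V) : MeasurableSpace (AugSub G) :=
  MeasurableSpace.generateFrom (cylGen G J)

lemma mcyl_mono {J J' : Set V} (h : J ⊆ J') : mcyl G J ≤ mcyl G J' := by
  apply MeasurableSpace.generateFrom_mono
  rintro s (⟨v, hv, rfl⟩ | ⟨u, hu, v, hv, rfl⟩)
  · exact Or.inl ⟨v, h hv, rfl⟩
  · exact Or.inr ⟨u, h hu, v, h hv, rfl⟩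

lemma mcyl_le_comapFst (J : Set V) :
    mcyl G J ≤ MeasurableSpace.comap Prod.fst (subgraphMeasurableSpace G) := by
  apply MeasurableSpace.generateFrom_le
  have hfst : @Measurable _ _ (MeasurableSpace.comap Prod.fst (subgraphMeasurableSpace G))
      (subgraphMeasurableSpace G) (Prod.fst : AugSub G → G.Subgraph) :=
    comap_measurable _
  rintro s (⟨v, _, rfl⟩ | ⟨u, _, v, _, rfl⟩)
  · exact hfst (measurableSet_setOf.mpr (measurable_vertsMem G v))
  · exact hfst (measurableSet_setOf.mpr (measurable_adjMem G u v))

lemma mcyl_le_outSigma {Γ H : G.Subgraph} {J : Set V} (hJ : ∀ v ∈ J, v ∉ H.verts) :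
    mcyl G J ≤ outSigma G Γ H := by
  apply MeasurableSpace.generateFrom_le
  have hout : @Measurable _ _ (outSigma G Γ H)
      (inferInstance : MeasurableSpace (AugSub G)) (outsideMap G Γ H) :=
    comap_measurable _
  rintro s (⟨v, hv, rfl⟩ | ⟨u, hu, v, hv, rfl⟩)
  · have h : {A : AugSub G | v ∈ A.1.verts} =
        outsideMap G Γ H ⁻¹' {A : AugSub G | v ∈ A.1.verts} := by
      ext A
      simp [outsideMap, SimpleGraph.Subgraph.deleteEdges_verts]
    rw [h]
    exact hout (measurableSet_setOf.mpr ((measurable_vertsMem G v).comp measurable_fst))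
  · have h : {A : AugSub G | A.1.Adj u v} =
        outsideMap G Γ H ⁻¹' {A : AugSub G | A.1.Adj u v} := by
      ext A
      simp only [Set.mem_setOf_eq, Set.mem_preimage, outsideMap,
        SimpleGraph.Subgraph.deleteEdges_adj]
      refine ⟨fun h => ⟨h, fun hmem => ?_⟩, fun h => h.1⟩
      exact hJ u hu (H.edge_vert (SimpleGraph.Subgraph.mem_edgeSet.mp hmem))
    rw [h]
    exact hout (measurableSet_setOf.mpr ((measurable_adjMem G u v).comp measurable_fst))

/-- The algebra of cylinder events on the subgraph coordinate. -/
def cylAlg : Set (Set (AugSub G)) :=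
  {s | ∃ J : Finset V, MeasurableSet[mcyl G (↑J : Set V)] s}

lemma isSetAlgebra_cylAlg : MeasureTheory.IsSetAlgebra (cylAlg G) := by
  classical
  constructor
  · exact ⟨∅, @MeasurableSet.empty _ (mcyl G _)⟩
  · rintro s ⟨J, hJ⟩
    exact ⟨J, hJ.compl⟩
  · rintro s t ⟨J, hJ⟩ ⟨J', hJ'⟩
    refine ⟨J ∪ J', MeasurableSet.union (m := mcyl G _) ?_ ?_⟩
    · exact (mcyl_mono G (by intro x hx; simp at hx ⊢; exact Or.inl hx)) _ hJ
    · exact (mcyl_mono G (by intro x hx; simp at hx ⊢; exact Or.inr hx)) _ hJ'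

lemma comapFst_eq_generateFrom_cylAlg :
    MeasurableSpace.comap Prod.fst (subgraphMeasurableSpace G) =
      MeasurableSpace.generateFrom (cylAlg G) := by
  classical
  refine le_antisymm ?_ ?_
  · have h1 : MeasurableSpace.comap Prod.fst (subgraphMeasurableSpace G) =
        MeasurableSpace.comap
          (fun A : AugSub G => (((fun v => v ∈ A.1.verts), A.1.Adj) :
            (V → Prop) × (V → V → Prop))) inferInstance :=
      MeasurableSpace.comap_comp
    rw [h1]
    letI : MeasurableSpace (AugSub G) := MeasurableSpace.generateFrom (cylAlg G)
    refine measurable_iff_comap_le.mp ?_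
    refine Measurable.prod (measurable_pi_iff.mpr fun v => ?_)
      (measurable_pi_iff.mpr fun u => measurable_pi_iff.mpr fun v => ?_)
    · refine measurable_of_setOf (MeasurableSpace.measurableSet_generateFrom ?_)
      exact ⟨{v}, MeasurableSpace.measurableSet_generateFrom (Or.inl ⟨v, by simp, rfl⟩)⟩
    · refine measurable_of_setOf (MeasurableSpace.measurableSet_generateFrom ?_)
      exact ⟨({u, v} : Finset V), MeasurableSpace.measurableSet_generateFrom
        (Or.inr ⟨u, by simp, v, by simp, rfl⟩)⟩
  · exact MeasurableSpace.generateFrom_le fun s hs => mcyl_le_comapFst G _ _ hs.choose_spec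

/-! ### Translations -/

lemma measurable_translateAug {d : ℕ} (t : Fin d → ℤ) :
    Measurable (translateAug t) := by
  apply Measurable.prod
  · apply measurable_to_subgraph (ZdGraph d)
    · intro v
      exact (measurable_vertsMem (ZdGraph d) (v - t)).comp measurable_fst
    · intro u v
      exact (measurable_adjMem (ZdGraph d) (u - t) (v - t)).comp measurable_fst
  · exact measurable_pi_iff.mpr fun K => measurable_pi_iff.mpr fun u =>
      measurable_pi_iff.mpr fun v =>
        measurable_phiEval (ZdGraph d) (translateSub (-t) K) (u - t) (v - t)

lemma measurable_translateAug_mcyl {d : ℕ} (t : Fin d → ℤ) (J : Set (Fin d → ℤ)) :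
    @Measurable _ _ (mcyl (ZdGraph d) ((fun v => v - t) '' J)) (mcyl (ZdGraph d) J)
      (translateAug t) := by
  refine @measurable_generateFrom _ _ (mcyl (ZdGraph d) ((fun v => v - t) '' J)) _ _ ?_
  rintro s (⟨v, hv, rfl⟩ | ⟨u, hu, v, hv, rfl⟩)
  · exact MeasurableSpace.measurableSet_generateFrom (Or.inl ⟨v - t, ⟨v, hv, rfl⟩, rfl⟩)
  · exact MeasurableSpace.measurableSet_generateFrom
      (Or.inr ⟨u - t, ⟨u, hu, rfl⟩, v - t, ⟨v, hv, rfl⟩, rfl⟩)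

/-- Lemma: invariant subgraph events lie in the tail completion.
Fix `d ≥ 1` and `β ∈ (0,∞]`, and let `Q` be a translation-invariant augmented `β`-arboreal
gas Gibbs measure on `ℤ^d`. Then for every translation-invariant event `X` measurable with
respect to the σ-algebra generated by the subgraph coordinate, there is a tail event `Y`
with `Q(X Δ Y) = 0`. -/
theorem invariant_subgraph_events_in_tail_completion
    (d : ℕ) (hd : 1 ≤ d) (β : ℝ≥0∞) (hβ : 0 < β)
    (Q : Measure (AugSub (ZdGraph d))) (hQ : IsTransInvAugGibbs d β Q)
    (X : Set (AugSub (ZdGraph d)))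
    (hXmeas : MeasurableSet[MeasurableSpace.comap Prod.fst
      (subgraphMeasurableSpace (ZdGraph d))] X)
    (hXinv : ∀ t : Fin d → ℤ, translateAug t ⁻¹' X = X) :
    ∃ Y : Set (AugSub (ZdGraph d)), IsTailEvent (ZdGraph d) ⊤ Y ∧ Q (X ∆ Y) = 0 := by
  classical
  obtain ⟨⟨hQprob, -, -⟩, hQinv⟩ := hQ
  haveI := hQprob
  haveI : Nonempty (Fin d) := ⟨⟨0, hd⟩⟩
  have h₀ : MeasurableSpace.comap (Prod.fst : AugSub (ZdGraph d) → (ZdGraph d).Subgraph)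
      (subgraphMeasurableSpace (ZdGraph d)) ≤ Prod.instMeasurableSpace :=
    Measurable.comap_le measurable_fst
  have hfin := @isFiniteMeasure_trim _ (MeasurableSpace.comap Prod.fst
      (subgraphMeasurableSpace (ZdGraph d))) _ Q h₀ inferInstance
  have hdense := @Measure.MeasureDense.of_generateFrom_isSetAlgebra_finite _
    (MeasurableSpace.comap Prod.fst (subgraphMeasurableSpace (ZdGraph d)))
    (Q.trim h₀) (cylAlg (ZdGraph d)) hfin (isSetAlgebra_cylAlg (ZdGraph d))
    (comapFst_eq_generateFrom_cylAlg (ZdGraph d))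
  -- an exhausting sequence of finite induced subgraphs
  obtain ⟨e, he⟩ := exists_surjective_nat (Fin d → ℤ)
  set Hseq : ℕ → (ZdGraph d).Subgraph :=
    fun n => traceSub (ZdGraph d) (e '' Set.Iio n) with hHseq
  have hHseqfin : ∀ n, (Hseq n).verts.Finite := fun n => (Set.finite_Iio n).image e
  -- geometric weights
  set r : ℝ≥0∞ := ENNReal.ofReal (1 / 2) with hr_def
  have hr1 : r < 1 := by
    rw [hr_def]
    exact ENNReal.ofReal_lt_one.mpr (by norm_num)
  have hXamb : MeasurableSet X := h₀ _ hXmeas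
  -- approximating events in the outside σ-algebras
  have hexists : ∀ n : ℕ, ∃ D : Set (AugSub (ZdGraph d)),
      MeasurableSet[outSigma (ZdGraph d) ⊤ (Hseq n)] D ∧ Q (X ∆ D) < r ^ n := by
    intro n
    obtain ⟨D', hD'A, hD'lt⟩ := @Measure.MeasureDense.approx _
      (MeasurableSpace.comap Prod.fst (subgraphMeasurableSpace (ZdGraph d)))
      (Q.trim h₀) (cylAlg (ZdGraph d)) hdense X hXmeas
      (by rw [trim_measurableSet_eq h₀ hXmeas]; exact measure_ne_top Q X)
      ((1 / 2 : ℝ) ^ n) (by positivity)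
    obtain ⟨J, hJ⟩ := hD'A
    have hDm₀ : MeasurableSet[MeasurableSpace.comap Prod.fst
        (subgraphMeasurableSpace (ZdGraph d))] D' := mcyl_le_comapFst (ZdGraph d) _ _ hJ
    -- choose a translation taking the support of `D'` away from `Hseq n`
    have hbad : (⋃ v ∈ (↑J : Set (Fin d → ℤ)), (fun h => v - h) '' (Hseq n).verts).Finite :=
      Set.Finite.biUnion J.finite_toSet fun v _ => (hHseqfin n).image _
    obtain ⟨t, ht⟩ := hbad.infinite_compl.nonempty
    have havoid : ∀ v ∈ ((fun v => v - t) '' (↑J : Set (Fin d → ℤ))),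
        v ∉ (Hseq n).verts := by
      rintro _ ⟨v, hv, rfl⟩ hmem
      exact ht (Set.mem_biUnion hv ⟨v - t, hmem, by simp [sub_sub_cancel]⟩)
    refine ⟨translateAug t ⁻¹' D', ?_, ?_⟩
    · exact mcyl_le_outSigma (ZdGraph d) havoid _ (measurable_translateAug_mcyl t _ hJ)
    · have hDamb : MeasurableSet D' := h₀ _ hDm₀
      have hsymm : MeasurableSet (X ∆ D') := hXamb.symmDiff hDamb
      have hpre : X ∆ (translateAug t ⁻¹' D') = translateAug t ⁻¹' (X ∆ D') := by
        rw [Set.preimage_symmDiff, hXinv t]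
      rw [hpre, ← Measure.map_apply (measurable_translateAug t) hsymm, hQinv t,
        ← trim_measurableSet_eq h₀ (hXmeas.symmDiff hDm₀)]
      calc Q.trim h₀ (X ∆ D') < ENNReal.ofReal ((1 / 2 : ℝ) ^ n) := hD'lt
        _ = r ^ n := by rw [hr_def, ← ENNReal.ofReal_pow (by norm_num : (0:ℝ) ≤ 1 / 2)]
  choose D hD1 hD2 using hexists
  refine ⟨⋂ m, ⋃ n, ⋃ _ : m ≤ n, D n, ?_, ?_⟩
  · -- the limsup event is a tail event
    intro H hle hfin
    obtain ⟨N, hN⟩ : ∃ N, ∀ n, N ≤ n → H ≤ Hseq n := by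
      obtain ⟨N, hNsub⟩ : ∃ N, H.verts ⊆ e '' Set.Iio N := by
        refine ⟨(hfin.toFinset.image (Function.surjInv he)).sup id + 1, fun v hv => ?_⟩
        refine ⟨Function.surjInv he v, ?_, Function.surjInv_eq he v⟩
        have hsup : Function.surjInv he v ≤
            (hfin.toFinset.image (Function.surjInv he)).sup id :=
          Finset.le_sup (f := id) (Finset.mem_image_of_mem _ (hfin.mem_toFinset.mpr hv))
        simpa [Set.mem_Iio] using Nat.lt_succ_of_le hsup
      refine ⟨N, fun n hn => ?_⟩
      have hsub : H.verts ⊆ (Hseq n).verts :=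
        hNsub.trans (Set.image_mono (f := e) fun x hx => lt_of_lt_of_le hx hn)
      exact ⟨hsub, fun u w huw =>
        ⟨H.adj_sub huw, hsub (H.edge_vert huw), hsub (H.edge_vert (H.adj_symm huw))⟩⟩
    have hYeq : (⋂ m, ⋃ n, ⋃ _ : m ≤ n, D n) = ⋂ m, ⋃ n, ⋃ _ : m + N ≤ n, D n := by
      ext A
      simp only [Set.mem_iInter, Set.mem_iUnion]
      constructor
      · intro h m
        obtain ⟨n, hn, hD⟩ := h (m + N)
        exact ⟨n, hn, hD⟩
      · intro h m
        obtain ⟨n, hn, hD⟩ := h m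
        exact ⟨n, by omega, hD⟩
    rw [hYeq]
    refine MeasurableSet.iInter fun m => MeasurableSet.iUnion fun n =>
      MeasurableSet.iUnion fun hn => ?_
    exact outSigma_antitone (ZdGraph d) (hN n (by omega)) _ (hD1 n)
  · -- the limsup event differs from `X` by a null set
    have hbound : ∀ m : ℕ,
        Q (X ∆ ⋂ m', ⋃ n, ⋃ _ : m' ≤ n, D n) ≤ r ^ m * (1 - r)⁻¹ := by
      intro m
      have hsub : X ∆ (⋂ m', ⋃ n, ⋃ _ : m' ≤ n, D n) ⊆ ⋃ k : ℕ, X ∆ D (m + k) := by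
        intro A hA
        rw [Set.mem_symmDiff] at hA
        rcases hA with ⟨hX, hnY⟩ | ⟨hY, hnX⟩
        · simp only [Set.mem_iInter, Set.mem_iUnion, not_forall, not_exists] at hnY
          obtain ⟨m', hm'⟩ := hnY
          refine Set.mem_iUnion.mpr ⟨m', ?_⟩
          rw [Set.mem_symmDiff]
          exact Or.inl ⟨hX, hm' (m + m') (by omega)⟩
        · simp only [Set.mem_iInter, Set.mem_iUnion] at hY
          obtain ⟨n, hn, hD⟩ := hY m
          refine Set.mem_iUnion.mpr ⟨n - m, ?_⟩
          rw [Set.mem_symmDiff]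
          exact Or.inr ⟨by rwa [show m + (n - m) = n by omega], hnX⟩
      calc Q (X ∆ ⋂ m', ⋃ n, ⋃ _ : m' ≤ n, D n)
          ≤ ∑' k : ℕ, Q (X ∆ D (m + k)) :=
            (measure_mono hsub).trans (measure_iUnion_le _)
        _ ≤ ∑' k : ℕ, r ^ (m + k) := ENNReal.tsum_le_tsum fun k => (hD2 (m + k)).le
        _ = r ^ m * (1 - r)⁻¹ := by
            simp_rw [pow_add]
            rw [ENNReal.tsum_mul_left, ENNReal.tsum_geometric]
    have hC : (1 - r)⁻¹ ≠ ⊤ := by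
      rw [Ne, ENNReal.inv_eq_top, tsub_eq_zero_iff_le]
      exact not_le.mpr hr1
    have htend : Filter.Tendsto (fun m : ℕ => r ^ m * (1 - r)⁻¹)
        Filter.atTop (nhds 0) := by
      have h1 := ENNReal.Tendsto.mul_const
        (ENNReal.tendsto_pow_atTop_nhds_zero_of_lt_one hr1) (b := (1 - r)⁻¹) (Or.inr hC)
      simpa using h1
    have hle0 : Q (X ∆ ⋂ m', ⋃ n, ⋃ _ : m' ≤ n, D n) ≤ 0 :=
      ge_of_tendsto htend (Filter.Eventually.of_forall hbound)
    exact le_zero_iff.mp hle0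

end ArborealGas

end
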